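/- For every positive short root β ∈ Φ_sh ∩ Φ⁺, the length of the reflection s_β satisfies l(s_β) = 2·ht(β) − 1. -/

import Mathlib

open scoped RealInnerProductSpace Classical

noncomputable section

variable {V : Type} [NormedAddCommGroup V] [InnerProductSpace ℝ V] [FiniteDimensional ℝ V]

/-- The orthogonal reflection of `V` in the hyperplane orthogonal to `α`
(the reflection `s_α` when `α` is a root). -/
def sref (α : V) : V ≃ₗᵢ[ℝ] V := Submodule.reflection (Submodule.span ℝ {α})ᗮ

/-- The pairing `⟨β, γ∨⟩ = 2(β|γ)/(γ|γ)` of a vector with the coroot of `γ`. -/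
def cpair (β γ : V) : ℝ := 2 * ⟪β, γ⟫ / ⟪γ, γ⟫

/-- An irreducible reduced (crystallographic) root system in the real inner product
space `V`, the inner product being invariant under the Weyl group (automatic, since
reflections are isometries), normalized so that the shortest roots have squared length `1`. -/
structure NRootSystem (V : Type) [NormedAddCommGroup V] [InnerProductSpace ℝ V]
    [FiniteDimensional ℝ V] where
  Φ : Finset V
  nonempty : Φ.Nonempty
  zero_not_mem : (0 : V) ∉ Φ
  span_eq_top : Submodule.span ℝ (Φ : Set V) = ⊤
  reduced : ∀ α ∈ Φ, ∀ t : ℝ, t • α ∈ Φ → t = 1 ∨ t = -1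
  pairing_int : ∀ α ∈ Φ, ∀ β ∈ Φ, ∃ n : ℤ, 2 * ⟪β, α⟫ = n * ⟪α, α⟫
  reflect_mem : ∀ α ∈ Φ, ∀ β ∈ Φ, sref α β ∈ Φ
  irreducible : ∀ S : Finset V, S ⊆ Φ → S.Nonempty → (Φ \ S).Nonempty →
    ∃ α ∈ S, ∃ β ∈ Φ \ S, ⟪α, β⟫ ≠ 0
  norm_one_le : ∀ α ∈ Φ, 1 ≤ ⟪α, α⟫
  exists_norm_one : ∃ α ∈ Φ, ⟪α, α⟫ = 1

namespace NRootSystem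

variable (R : NRootSystem V)

/-- `r`, the maximal squared length of a root. -/
def r : ℝ := R.Φ.sup' R.nonempty fun α => ⟪α, α⟫

/-- long roots -/
def IsLong (α : V) : Prop := α ∈ R.Φ ∧ ⟪α, α⟫ = R.r

/-- short roots -/
def IsShort (α : V) : Prop := α ∈ R.Φ ∧ ⟪α, α⟫ < R.r

/-- The Weyl group `W`, generated by the reflections in the roots. -/
def Weyl : Subgroup (V ≃ₗᵢ[ℝ] V) := Subgroup.closure (sref '' (R.Φ : Set V))

end NRootSystem

/-- The standard parabolic subgroup `W_I` generated by the reflections in `I ⊆ Δ`. -/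
def WeylP (I : Finset V) : Subgroup (V ≃ₗᵢ[ℝ] V) := Subgroup.closure (sref '' (I : Set V))

/-- A base (set of simple roots) `Δ` of the root system, together with the
integral coordinates `coeff γ α` of each root `γ` in the basis `Δ`; every root is a
nonnegative or a nonpositive integral combination of the simple roots. -/
structure Base {V : Type} [NormedAddCommGroup V] [InnerProductSpace ℝ V]
    [FiniteDimensional ℝ V] (R : NRootSystem V) where
  Δ : Finset V
  subset : Δ ⊆ R.Φ
  indep : LinearIndependent ℝ (fun a : {x : V // x ∈ Δ} => (a : V))
  coeff : V → V → ℤ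
  coeff_spec : ∀ γ ∈ R.Φ, γ = ∑ α ∈ Δ, (coeff γ α : ℝ) • α
  coeff_sign : ∀ γ ∈ R.Φ, (∀ α ∈ Δ, 0 ≤ coeff γ α) ∨ (∀ α ∈ Δ, coeff γ α ≤ 0)

namespace Base

variable {R : NRootSystem V} (B : Base R)

/-- positive roots -/
def IsPos (γ : V) : Prop := γ ∈ R.Φ ∧ ∀ α ∈ B.Δ, 0 ≤ B.coeff γ α

/-- negative roots -/
def IsNeg (γ : V) : Prop := γ ∈ R.Φ ∧ ∀ α ∈ B.Δ, B.coeff γ α ≤ 0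

/-- the height of a root -/
def ht (γ : V) : ℤ := ∑ α ∈ B.Δ, B.coeff γ α

/-- the dual height `ht∨ γ = ht (γ∨)`: the height of the coroot `γ∨ = 2γ/(γ|γ)`
with respect to the basis of simple coroots `α∨ = 2α/(α|α)`, `α ∈ Δ`. -/
def htv (γ : V) : ℝ := ∑ α ∈ B.Δ, (B.coeff γ α : ℝ) * ⟪α, α⟫ / ⟪γ, γ⟫

/-- The length of `w`: the minimal length of an expression of `w` as a product of
simple reflections. -/
def len (w : V ≃ₗᵢ[ℝ] V) : ℕ :=
  sInf {n | ∃ g : Fin n → V, (∀ i, g i ∈ B.Δ) ∧ w = (List.ofFn fun i => sref (g i)).prod}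

/-- `w` is the longest element of the subgroup `H`. -/
def IsLongest (H : Subgroup (V ≃ₗᵢ[ℝ] V)) (w : V ≃ₗᵢ[ℝ] V) : Prop :=
  w ∈ H ∧ ∀ u ∈ H, B.len u ≤ B.len w

/-- `X_I = {w ∈ W | w(Φ_I⁺) ⊆ Φ⁺}`, the set of minimal length coset
representatives of `W/W_I`. -/
def XI (I : Finset V) : Set (V ≃ₗᵢ[ℝ] V) :=
  {w | w ∈ R.Weyl ∧
    ∀ γ, γ ∈ R.Φ → γ ∈ Submodule.span ℝ (I : Set V) → B.IsPos γ → B.IsPos (w γ)}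

/-- `h` is the highest root. -/
def IsHighest (h : V) : Prop :=
  h ∈ R.Φ ∧ ∀ γ ∈ R.Φ, ∀ α ∈ B.Δ, B.coeff γ α ≤ B.coeff h α

/-- `Ĩ = {α ∈ Δ | (h|α) = 0}`, the simple roots orthogonal to the highest root `h`. -/
def Itil (h : V) : Finset V := B.Δ.filter fun α => ⟪h, α⟫ = 0

/-- The level `L(α)` of a long root `α`, where `h` is the highest root:
`L(α) = ht∨(h) − ht∨(α)` if `α > 0` and `L(α) = ht∨(h) − ht∨(α) − 1` if `α < 0`. -/
def level (h α : V) : ℝ :=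
  if B.IsPos α then B.htv h - B.htv α else B.htv h - B.htv α - 1

/-- The elementary step relation `β →_γ α` on long roots (`γ` a positive root):
`α = s_γ(β)` and `L(α) = L(β) + 1`. -/
def Step (h γ β α : V) : Prop :=
  R.IsLong β ∧ R.IsLong α ∧ B.IsPos γ ∧ α = sref γ β ∧
    B.level h α = B.level h β + 1

/-- `g` is the sequence of positive roots of a path
`β = β₀ →_{g 0} β₁ →_{g 1} ⋯ →_{g (n-1)} β_n = α` from `β` to `α`. -/
def IsPathWord (h : V) {n : ℕ} (g : Fin n → V) (β α : V) : Prop :=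
  ∃ c : Fin (n + 1) → V, c 0 = β ∧ c (Fin.last n) = α ∧
    ∀ i : Fin n, B.Step h (g i) (c i.castSucc) (c i.succ)

/-- a path all of whose steps use simple roots -/
def IsSimplePathWord (h : V) {n : ℕ} (g : Fin n → V) (β α : V) : Prop :=
  B.IsPathWord h g β α ∧ ∀ i, g i ∈ B.Δ

/-- there is a path from `β` to `α`, i.e. `α ⪯ β` -/
def HasPath (h β α : V) : Prop := ∃ (n : ℕ) (g : Fin n → V), B.IsPathWord h g β α

/-- there is a simple path from `β` to `α` -/
def HasSimplePath (h β α : V) : Prop :=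
  ∃ (n : ℕ) (g : Fin n → V), B.IsSimplePathWord h g β α

/-- The covering relation `w →_γ w'` for the Bruhat order:
`w' = s_γ w` and `l(w') = l(w) + 1`, for a positive root `γ`. -/
def BStep (γ : V) (w w' : V ≃ₗᵢ[ℝ] V) : Prop :=
  B.IsPos γ ∧ w' = sref γ * w ∧ B.len w' = B.len w + 1

/-- The Bruhat order on `W`: the reflexive–transitive closure of the covering
relations. -/
def bruhatLE : (V ≃ₗᵢ[ℝ] V) → (V ≃ₗᵢ[ℝ] V) → Prop :=
  Relation.ReflTransGen fun w w' => ∃ γ, B.BStep γ w w'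

/-- `x` is an element of `W` with `x(β) = α` of the minimal possible length
`|L(α) − L(β)|` (this is the element `x_{αβ}` when it exists). -/
def MinTake (h β α : V) (x : V ≃ₗᵢ[ℝ] V) : Prop :=
  x ∈ R.Weyl ∧ x β = α ∧ (B.len x : ℝ) = |B.level h α - B.level h β|

/-- `g` is a reduced expression of `x` as a product of simple reflections. -/
def IsReducedWord {n : ℕ} (g : Fin n → V) (x : V ≃ₗᵢ[ℝ] V) : Prop :=
  (∀ i, g i ∈ B.Δ) ∧ x = (List.ofFn fun i => sref (g i)).prod ∧ n = B.len x

/-- The depth of a positive root `β`: the minimal integer `k` such that there is an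
element `w` of `W` of length `k` with `w(β) < 0`. -/
def depth (β : V) : ℕ := sInf {n | ∃ w ∈ R.Weyl, B.len w = n ∧ B.IsNeg (w β)}

end Base

set_option linter.unusedSectionVars false
section Aux

lemma sref_apply' (α x : V) : sref α x = x - (2 * ⟪x, α⟫ / ⟪α, α⟫) • α := by
  rw [sref, Submodule.reflection_orthogonal_apply, Submodule.reflection_singleton_apply]
  rw [real_inner_self_eq_norm_sq, real_inner_comm]
  simp only [RCLike.ofReal_real_eq_id, id_eq]
  module

lemma sref_sref (α x : V) : sref α (sref α x) = x := Submodule.reflection_reflection _ x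

lemma sref_mul_self (α : V) : sref α * sref α = 1 := Submodule.reflection_mul_reflection _

lemma sref_inv (α : V) : (sref α)⁻¹ = sref α := Submodule.reflection_inv

lemma sref_self (α : V) (hα : α ≠ 0) : sref α α = -α := by
  have h : ⟪α, α⟫ ≠ 0 := by
    exact fun h => hα ((@inner_self_eq_zero ℝ _ _ _ _ α).1 h)
  rw [sref_apply']
  rw [div_eq_iff h |>.2 (by ring : 2 * ⟪α, α⟫ = 2 * ⟪α, α⟫)]
  module

lemma sref_conj (u : V ≃ₗᵢ[ℝ] V) (α : V) : sref (u α) = u * sref α * u⁻¹ := by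
  ext x
  have h1 : (u * sref α * u⁻¹) x = u (sref α (u.symm x)) := rfl
  rw [h1, sref_apply', sref_apply', map_sub, map_smul]
  have h2 : u (u.symm x) = x := u.apply_symm_apply x
  have h3 : ⟪u.symm x, α⟫ = ⟪x, u α⟫ := by
    rw [← u.inner_map_map (u.symm x) α, h2]
  have h4 : ⟪u α, u α⟫ = ⟪α, α⟫ := u.inner_map_map α α
  rw [h2, h3, h4]

variable {R : NRootSystem V}

lemma root_ne_zero {α : V} (hα : α ∈ R.Φ) : α ≠ 0 := fun h => R.zero_not_mem (h ▸ hα)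

lemma root_inner_pos {α : V} (hα : α ∈ R.Φ) : 0 < ⟪α, α⟫ :=
  lt_of_lt_of_le one_pos (R.norm_one_le α hα)

lemma neg_root_mem {α : V} (hα : α ∈ R.Φ) : -α ∈ R.Φ := by
  have := R.reflect_mem α hα α hα
  rwa [sref_self α (root_ne_zero hα)] at this

lemma sref_root_eq {α γ : V} (hα : α ∈ R.Φ) (hγ : γ ∈ R.Φ) :
    ∃ n : ℤ, 2 * ⟪γ, α⟫ = n * ⟪α, α⟫ ∧ sref α γ = γ - (n : ℝ) • α := by
  obtain ⟨n, hn⟩ := R.pairing_int α hα γ hγ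
  exact ⟨n, hn, by rw [sref_apply', hn, mul_div_assoc,
    div_self (ne_of_gt (root_inner_pos hα)), mul_one]⟩

end Aux
section Coeff
variable {R : NRootSystem V} (B : Base R)

lemma coeff_zero_of_sum {f : V → ℝ} (h : ∑ α ∈ B.Δ, f α • α = 0) :
    ∀ α ∈ B.Δ, f α = 0 := by
  intro α hα
  have h' : ∑ a : {x : V // x ∈ B.Δ}, f a • (a : V) = 0 := by
    rw [Finset.sum_coe_sort B.Δ (fun x => f x • x)]; exact h
  have := linearIndependent_iff'.1 B.indep Finset.univ (fun a => f a) h' ⟨α, hα⟩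
    (Finset.mem_univ _)
  exact this

lemma coeff_eq {γ : V} (hγ : γ ∈ R.Φ) (c : V → ℝ)
    (h : γ = ∑ α ∈ B.Δ, c α • α) : ∀ α ∈ B.Δ, c α = (B.coeff γ α : ℝ) := by
  intro α hα
  have h2 := B.coeff_spec γ hγ
  have h3 : ∑ a ∈ B.Δ, (c a - (B.coeff γ a : ℝ)) • a = 0 := by
    rw [Finset.sum_congr rfl (fun a _ => sub_smul (c a) _ a), Finset.sum_sub_distrib,
      ← h, ← h2, sub_self]
  have := coeff_zero_of_sum B h3 α hα
  linarith

lemma coeff_neg {γ : V} (hγ : γ ∈ R.Φ) :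
    ∀ α ∈ B.Δ, B.coeff (-γ) α = -B.coeff γ α := by
  intro α hα
  have h : -γ = ∑ a ∈ B.Δ, (-(B.coeff γ a : ℝ)) • a := by
    rw [show -γ = -(∑ a ∈ B.Δ, (B.coeff γ a : ℝ) • a) from by rw [← B.coeff_spec γ hγ],
      ← Finset.sum_neg_distrib]
    exact Finset.sum_congr rfl (fun a _ => (neg_smul _ _).symm)
  have := coeff_eq B (neg_root_mem hγ) _ h α hα
  exact_mod_cast this.symm

lemma pos_or_neg {γ : V} (hγ : γ ∈ R.Φ) : B.IsPos γ ∨ B.IsNeg γ := by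
  rcases B.coeff_sign γ hγ with h | h
  · exact Or.inl ⟨hγ, h⟩
  · exact Or.inr ⟨hγ, h⟩

lemma not_pos_and_neg {γ : V} (hγ : γ ∈ R.Φ) : ¬(B.IsPos γ ∧ B.IsNeg γ) := by
  rintro ⟨⟨-, h1⟩, ⟨-, h2⟩⟩
  have hz : γ = 0 := by
    rw [B.coeff_spec γ hγ]
    apply Finset.sum_eq_zero
    intro α hα
    have : B.coeff γ α = 0 := le_antisymm (h2 α hα) (h1 α hα)
    rw [this]; simp
  exact R.zero_not_mem (hz ▸ hγ)

lemma isNeg_iff_not_isPos {γ : V} (hγ : γ ∈ R.Φ) : B.IsNeg γ ↔ ¬B.IsPos γ := by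
  constructor
  · intro h hp; exact not_pos_and_neg B hγ ⟨hp, h⟩
  · intro h; rcases pos_or_neg B hγ with h' | h'; exact absurd h' h; exact h'

lemma isNeg_neg_iff {γ : V} (hγ : γ ∈ R.Φ) : B.IsNeg (-γ) ↔ B.IsPos γ := by
  constructor
  · rintro ⟨-, h⟩
    refine ⟨hγ, fun α hα => ?_⟩
    have := h α hα
    rw [coeff_neg B hγ α hα] at this
    linarith
  · rintro ⟨-, h⟩
    refine ⟨neg_root_mem hγ, fun α hα => ?_⟩
    rw [coeff_neg B hγ α hα]
    linarith [h α hα]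

lemma isPos_neg_iff {γ : V} (hγ : γ ∈ R.Φ) : B.IsPos (-γ) ↔ B.IsNeg γ := by
  have h := isNeg_neg_iff B (neg_root_mem hγ)
  rw [neg_neg] at h
  exact h.symm

lemma ht_ge_one {γ : V} (hγ : γ ∈ R.Φ) (hp : B.IsPos γ) : 1 ≤ B.ht γ := by
  have h0 : 0 ≤ B.ht γ := Finset.sum_nonneg (fun α hα => hp.2 α hα)
  rcases eq_or_lt_of_le h0 with h | h
  · exfalso
    have hz : ∀ α ∈ B.Δ, B.coeff γ α = 0 :=
      (Finset.sum_eq_zero_iff_of_nonneg (fun α hα => hp.2 α hα)).1 h.symm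
    have : γ = 0 := by
      rw [B.coeff_spec γ hγ]
      exact Finset.sum_eq_zero (fun α hα => by rw [hz α hα]; simp)
    exact R.zero_not_mem (this ▸ hγ)
  · exact h

lemma ht_le_neg_one {γ : V} (hγ : γ ∈ R.Φ) (hn : B.IsNeg γ) : B.ht γ ≤ -1 := by
  have h := ht_ge_one B (neg_root_mem hγ) ((isPos_neg_iff B hγ).2 hn)
  have hh : B.ht (-γ) = -B.ht γ := by
    unfold Base.ht
    rw [← Finset.sum_neg_distrib]
    exact Finset.sum_congr rfl (fun α hα => coeff_neg B hγ α hα)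
  omega

lemma coeff_simple {α : V} (hα : α ∈ B.Δ) :
    ∀ α' ∈ B.Δ, (B.coeff α α' : ℝ) = if α' = α then 1 else 0 := by
  intro α' hα'
  have h : α = ∑ a ∈ B.Δ, (if a = α then (1:ℝ) else 0) • a := by
    simp only [ite_smul, one_smul, zero_smul]
    rw [Finset.sum_ite_eq' B.Δ α (fun a => a)]
    simp [hα]
  exact (coeff_eq B (B.subset hα) _ h α' hα').symm

lemma coeff_simple_int {α : V} (hα : α ∈ B.Δ) :
    ∀ α' ∈ B.Δ, B.coeff α α' = if α' = α then 1 else 0 := by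
  intro α' hα'
  have h := coeff_simple B hα α' hα'
  have h2 : (B.coeff α α' : ℝ) = ((if α' = α then (1:ℤ) else 0 : ℤ) : ℝ) := by
    rw [h]; split <;> simp
  exact_mod_cast h2

lemma isPos_simple {α : V} (hα : α ∈ B.Δ) : B.IsPos α := by
  refine ⟨B.subset hα, fun α' hα' => ?_⟩
  rw [coeff_simple_int B hα α' hα']
  split <;> omega

lemma ht_simple {α : V} (hα : α ∈ B.Δ) : B.ht α = 1 := by
  unfold Base.ht
  rw [Finset.sum_congr rfl (coeff_simple_int B hα)]
  rw [Finset.sum_ite_eq' B.Δ α (fun _ => (1:ℤ))]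
  simp [hα]

end Coeff
section P1
variable {R : NRootSystem V} (B : Base R)

lemma coeff_sref_simple {α γ : V} (hα : α ∈ B.Δ) (hγ : γ ∈ R.Φ) :
    ∃ n : ℤ, 2 * ⟪γ, α⟫ = n * ⟪α, α⟫ ∧
      ∀ α' ∈ B.Δ, B.coeff (sref α γ) α' = B.coeff γ α' - if α' = α then n else 0 := by
  obtain ⟨n, hn, heq⟩ := sref_root_eq (B.subset hα) hγ
  refine ⟨n, hn, fun α' hα' => ?_⟩
  have hmem : sref α γ ∈ R.Φ := R.reflect_mem α (B.subset hα) γ hγ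
  have h : sref α γ = ∑ a ∈ B.Δ, ((B.coeff γ a : ℝ) - if a = α then (n:ℝ) else 0) • a := by
    rw [heq]
    rw [Finset.sum_congr rfl (fun a _ => sub_smul _ _ a), Finset.sum_sub_distrib]
    rw [← B.coeff_spec γ hγ]
    congr 1
    simp only [ite_smul, zero_smul]
    rw [Finset.sum_ite_eq' B.Δ α (fun a => (n:ℝ) • a)]
    simp [hα]
  have h2 := coeff_eq B hmem _ h α' hα'
  have h3 : ((B.coeff γ α' - if α' = α then n else 0 : ℤ) : ℝ)
      = (B.coeff (sref α γ) α' : ℝ) := by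
    rw [← h2]; push_cast; split <;> simp
  exact_mod_cast h3.symm

lemma sref_simple_isPos {α γ : V} (hα : α ∈ B.Δ) (hγ : γ ∈ R.Φ) (hp : B.IsPos γ)
    (hne : γ ≠ α) : B.IsPos (sref α γ) := by
  have hmem : sref α γ ∈ R.Φ := R.reflect_mem α (B.subset hα) γ hγ
  obtain ⟨n, hn, hco⟩ := coeff_sref_simple B hα hγ
  rcases pos_or_neg B hmem with h | h
  · exact h
  exfalso
  have hz : ∀ α' ∈ B.Δ, α' ≠ α → B.coeff γ α' = 0 := by
    intro α' hα' hne'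
    have h1 := h.2 α' hα'
    rw [hco α' hα'] at h1
    simp only [hne', if_false, sub_zero] at h1
    exact le_antisymm h1 (hp.2 α' hα')
  have hγα : γ = (B.coeff γ α : ℝ) • α := by
    conv_lhs => rw [B.coeff_spec γ hγ]
    rw [Finset.sum_eq_single_of_mem α hα (fun a ha hne' => by rw [hz a ha hne']; simp)]
  have := R.reduced α (B.subset hα) (B.coeff γ α : ℝ) (by rw [← hγα]; exact hγ)
  rcases this with h1 | h1
  · exact hne (by rw [hγα, h1, one_smul])
  · have : B.coeff γ α = -1 := by exact_mod_cast h1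
    linarith [hp.2 α hα]

lemma eq_simple_of_ht_one {γ : V} (hγ : γ ∈ R.Φ) (hp : B.IsPos γ) (hht : B.ht γ = 1) :
    γ ∈ B.Δ := by
  obtain ⟨α₀, hα₀, hge⟩ : ∃ α₀ ∈ B.Δ, 1 ≤ B.coeff γ α₀ := by
    by_contra h
    push_neg at h
    have : B.ht γ ≤ 0 := Finset.sum_nonpos (fun a ha => by linarith [h a ha])
    omega
  have hrest : ∀ a ∈ B.Δ, a ≠ α₀ → B.coeff γ a = 0 := by
    intro a ha hne
    by_contra h
    have h1 : 1 ≤ B.coeff γ a := lt_of_le_of_ne (hp.2 a ha) (Ne.symm h)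
    have h2 : 2 ≤ B.ht γ := by
      have := Finset.sum_le_sum_of_subset_of_nonneg
        (Finset.insert_subset ha (Finset.singleton_subset_iff.2 hα₀))
        (fun x hx _ => hp.2 x hx)
      rw [Finset.sum_insert (by simp [hne])] at this
      unfold Base.ht
      simp only [Finset.sum_singleton] at this
      omega
    omega
  have hco : B.coeff γ α₀ = 1 := by
    have : B.ht γ = B.coeff γ α₀ := by
      unfold Base.ht
      rw [Finset.sum_eq_single_of_mem α₀ hα₀ (fun a ha hne => hrest a ha hne)]
    omega
  have : γ = α₀ := by
    conv_lhs => rw [B.coeff_spec γ hγ]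
    rw [Finset.sum_eq_single_of_mem α₀ hα₀ (fun a ha hne => by rw [hrest a ha hne]; simp)]
    rw [hco]; simp
  rw [this]; exact hα₀

lemma isNeg_sref_simple_iff {α δ : V} (hα : α ∈ B.Δ) (hδ : δ ∈ R.Φ) :
    B.IsNeg (sref α δ) ↔ (B.IsNeg δ ∧ δ ≠ -α) ∨ δ = α := by
  have hαΦ : α ∈ R.Φ := B.subset hα
  have hαpos : B.IsPos α := isPos_simple B hα
  have hmem : sref α δ ∈ R.Φ := R.reflect_mem α hαΦ δ hδ
  rcases pos_or_neg B hδ with hp | hn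
  · by_cases h : δ = α
    · subst h
      rw [sref_self δ (root_ne_zero hδ)]
      simp only [or_true, iff_true]
      exact (isNeg_neg_iff B hδ).2 hp
    · have hpos := sref_simple_isPos B hα hδ hp h
      constructor
      · intro hneg; exact absurd ⟨hpos, hneg⟩ (not_pos_and_neg B hmem)
      · rintro (⟨h1, -⟩ | h1)
        · exact absurd ⟨hp, h1⟩ (not_pos_and_neg B hδ)
        · exact absurd h1 h
  · have hδα : δ ≠ α := by
      rintro rfl
      exact not_pos_and_neg B hδ ⟨hαpos, hn⟩
    by_cases h : δ = -α
    · subst h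
      have : sref α (-α) = α := by
        rw [map_neg, sref_self α (root_ne_zero hαΦ), neg_neg]
      rw [this]
      constructor
      · intro hneg; exact absurd ⟨hαpos, hneg⟩ (not_pos_and_neg B hαΦ)
      · rintro (⟨-, h1⟩ | h1)
        · exact absurd rfl h1
        · exact absurd h1 hδα
    · have hnegδ : -δ ∈ R.Φ := neg_root_mem hδ
      have hnδpos : B.IsPos (-δ) := (isPos_neg_iff B hδ).2 hn
      have hnδα : -δ ≠ α := fun hh => h (by rw [← hh]; simp)
      have hpos := sref_simple_isPos B hα hnegδ hnδpos hnδα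
      rw [map_neg] at hpos
      have : B.IsNeg (sref α δ) := (isPos_neg_iff B hmem).1 hpos
      simp [this, hn, h]
end P1
section Words
variable {R : NRootSystem V}

/-- `w` is a product of simple reflections. -/
def Wrd (B : Base R) (w : V ≃ₗᵢ[ℝ] V) : Prop :=
  ∃ l : List V, (∀ x ∈ l, x ∈ B.Δ) ∧ w = (l.map sref).prod

variable (B : Base R)

lemma Wrd_one : Wrd B 1 := ⟨[], by simp, by simp⟩

lemma Wrd_sref {α : V} (hα : α ∈ B.Δ) : Wrd B (sref α) := ⟨[α], by simp [hα], by simp⟩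

lemma Wrd.mul {w w' : V ≃ₗᵢ[ℝ] V} (hw : Wrd B w) (hw' : Wrd B w') : Wrd B (w * w') := by
  obtain ⟨l, hl, rfl⟩ := hw
  obtain ⟨l', hl', rfl⟩ := hw'
  refine ⟨l ++ l', ?_, by rw [List.map_append, List.prod_append]⟩
  intro x hx
  rcases List.mem_append.1 hx with h | h
  exacts [hl x h, hl' x h]

lemma Wrd.inv {w : V ≃ₗᵢ[ℝ] V} (hw : Wrd B w) : Wrd B w⁻¹ := by
  obtain ⟨l, hl, rfl⟩ := hw
  refine ⟨l.reverse, fun x hx => hl x (List.mem_reverse.1 hx), ?_⟩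
  rw [List.prod_inv_reverse, List.map_reverse, List.map_map]
  rw [show (fun x => x⁻¹) ∘ sref = (sref : V → V ≃ₗᵢ[ℝ] V) from funext (fun x => sref_inv x)]

lemma prod_maps : ∀ (l : List V), (∀ x ∈ l, x ∈ B.Δ) →
    ∀ γ ∈ R.Φ, (l.map sref).prod γ ∈ R.Φ := by
  intro l
  induction l with
  | nil => intro _ γ hγ; simpa using hγ
  | cons a t ih =>
    intro hl γ hγ
    have h1 : ((a :: t).map sref).prod γ = sref a ((t.map sref).prod γ) := by
      rw [List.map_cons, List.prod_cons]; rfl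
    rw [h1]
    exact R.reflect_mem a (B.subset (hl a (by simp))) _
      (ih (fun x hx => hl x (by simp [hx])) γ hγ)

lemma Wrd.maps {w : V ≃ₗᵢ[ℝ] V} (hw : Wrd B w) : ∀ γ ∈ R.Φ, w γ ∈ R.Φ := by
  obtain ⟨l, hl, rfl⟩ := hw
  exact prod_maps B l hl

/-- The number of positive roots sent to negative roots by `w`. -/
def NN (B : Base R) (w : V ≃ₗᵢ[ℝ] V) : ℕ :=
  (R.Φ.filter (fun γ => B.IsPos γ ∧ B.IsNeg (w γ))).card

lemma NN_one : NN B 1 = 0 := by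
  unfold NN
  rw [Finset.card_eq_zero, Finset.filter_eq_empty_iff]
  rintro γ hγ ⟨hp, hn⟩
  exact not_pos_and_neg B hγ ⟨hp, hn⟩

lemma NN_inv {w : V ≃ₗᵢ[ℝ] V} (hw : Wrd B w) : NN B w⁻¹ = NN B w := by
  unfold NN
  apply Finset.card_bij' (fun γ _ => -(w⁻¹ γ)) (fun γ _ => -(w γ))
  · intro γ hγ
    simp only [Finset.mem_filter] at hγ ⊢
    obtain ⟨hγΦ, hp, hn⟩ := hγ
    have h1 : w⁻¹ γ ∈ R.Φ := hw.inv B |>.maps B γ hγΦ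
    refine ⟨neg_root_mem h1, (isPos_neg_iff B h1).2 hn, ?_⟩
    have h2 : w (-(w⁻¹ γ)) = -γ := by
      rw [map_neg]
      congr 1
      exact w.apply_symm_apply γ
    rw [h2]
    exact (isNeg_neg_iff B hγΦ).2 hp
  · intro γ hγ
    simp only [Finset.mem_filter] at hγ ⊢
    obtain ⟨hγΦ, hp, hn⟩ := hγ
    have h1 : w γ ∈ R.Φ := hw.maps B γ hγΦ
    refine ⟨neg_root_mem h1, (isPos_neg_iff B h1).2 hn, ?_⟩
    have h2 : w⁻¹ (-(w γ)) = -γ := by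
      rw [map_neg]
      congr 1
      exact w.symm_apply_apply γ
    rw [h2]
    exact (isNeg_neg_iff B hγΦ).2 hp
  · intro γ hγ
    simp only [map_neg, neg_neg]
    congr 1
    exact w.apply_symm_apply γ
  · intro γ hγ
    simp only [map_neg, neg_neg]
    congr 1
    exact w.symm_apply_apply γ

end Words
section NNrec
variable {R : NRootSystem V} (B : Base R)

lemma NN_sref_mul_pos {w : V ≃ₗᵢ[ℝ] V} (hw : Wrd B w) {α : V} (hα : α ∈ B.Δ)
    (h : B.IsPos (w⁻¹ α)) : NN B (sref α * w) = NN B w + 1 := by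
  have hαΦ := B.subset hα
  have hmem : w⁻¹ α ∈ R.Φ := (hw.inv B).maps B α hαΦ
  have happ : w (w⁻¹ α) = α := w.apply_symm_apply α
  have hset : R.Φ.filter (fun γ => B.IsPos γ ∧ B.IsNeg ((sref α * w) γ)) =
      insert (w⁻¹ α) (R.Φ.filter (fun γ => B.IsPos γ ∧ B.IsNeg (w γ))) := by
    ext γ
    simp only [Finset.mem_insert, Finset.mem_filter]
    constructor
    · rintro ⟨hγΦ, hp, hneg⟩
      have hwγ : w γ ∈ R.Φ := hw.maps B γ hγΦ
      have hneg' : B.IsNeg (sref α (w γ)) := hneg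
      rcases (isNeg_sref_simple_iff B hα hwγ).1 hneg' with ⟨h1, _⟩ | h1
      · exact Or.inr ⟨hγΦ, hp, h1⟩
      · exact Or.inl (by apply_fun w using w.injective; rw [happ, h1])
    · rintro (rfl | ⟨hγΦ, hp, hneg⟩)
      · refine ⟨hmem, h, ?_⟩
        show B.IsNeg (sref α (w (w⁻¹ α)))
        rw [happ, sref_self α (root_ne_zero hαΦ)]
        exact (isNeg_neg_iff B hαΦ).2 (isPos_simple B hα)
      · have hwγ : w γ ∈ R.Φ := hw.maps B γ hγΦ
        refine ⟨hγΦ, hp, ?_⟩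
        show B.IsNeg (sref α (w γ))
        rw [isNeg_sref_simple_iff B hα hwγ]
        left
        refine ⟨hneg, fun hh => ?_⟩
        have hγeq : γ = -(w⁻¹ α) := by
          apply_fun w using w.injective
          rw [map_neg, happ, hh]
        rw [hγeq] at hp
        exact not_pos_and_neg B hmem ⟨h, (isPos_neg_iff B hmem).1 hp⟩
  have hnotmem : w⁻¹ α ∉ R.Φ.filter (fun γ => B.IsPos γ ∧ B.IsNeg (w γ)) := by
    simp only [Finset.mem_filter]
    rintro ⟨-, -, hneg⟩
    rw [happ] at hneg
    exact not_pos_and_neg B hαΦ ⟨isPos_simple B hα, hneg⟩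
  unfold NN
  rw [hset, Finset.card_insert_of_notMem hnotmem]

lemma NN_sref_mul_neg {w : V ≃ₗᵢ[ℝ] V} (hw : Wrd B w) {α : V} (hα : α ∈ B.Δ)
    (h : B.IsNeg (w⁻¹ α)) : NN B (sref α * w) + 1 = NN B w := by
  have hαΦ := B.subset hα
  have hmem : w⁻¹ α ∈ R.Φ := (hw.inv B).maps B α hαΦ
  have happ : w (w⁻¹ α) = α := w.apply_symm_apply α
  have hγ₀Φ : -(w⁻¹ α) ∈ R.Φ := neg_root_mem hmem
  have hwγ₀ : w (-(w⁻¹ α)) = -α := by rw [map_neg, happ]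
  have hγ₀mem : -(w⁻¹ α) ∈ R.Φ.filter (fun γ => B.IsPos γ ∧ B.IsNeg (w γ)) := by
    simp only [Finset.mem_filter]
    refine ⟨hγ₀Φ, (isPos_neg_iff B hmem).2 h, ?_⟩
    rw [hwγ₀]
    exact (isNeg_neg_iff B hαΦ).2 (isPos_simple B hα)
  have hset : R.Φ.filter (fun γ => B.IsPos γ ∧ B.IsNeg ((sref α * w) γ)) =
      (R.Φ.filter (fun γ => B.IsPos γ ∧ B.IsNeg (w γ))).erase (-(w⁻¹ α)) := by
    ext γ
    simp only [Finset.mem_erase, Finset.mem_filter]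
    constructor
    · rintro ⟨hγΦ, hp, hneg⟩
      have hwγ : w γ ∈ R.Φ := hw.maps B γ hγΦ
      have hneg' : B.IsNeg (sref α (w γ)) := hneg
      rcases (isNeg_sref_simple_iff B hα hwγ).1 hneg' with ⟨h1, h2⟩ | h1
      · refine ⟨fun hh => h2 ?_, hγΦ, hp, h1⟩
        rw [hh, hwγ₀]
      · exfalso
        have hγeq : γ = w⁻¹ α := by apply_fun w using w.injective; rw [happ, h1]
        rw [hγeq] at hp
        exact not_pos_and_neg B hmem ⟨hp, h⟩
    · rintro ⟨hne, hγΦ, hp, hneg⟩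
      have hwγ : w γ ∈ R.Φ := hw.maps B γ hγΦ
      refine ⟨hγΦ, hp, ?_⟩
      show B.IsNeg (sref α (w γ))
      rw [isNeg_sref_simple_iff B hα hwγ]
      left
      refine ⟨hneg, fun hh => hne ?_⟩
      apply_fun w using w.injective
      rw [hwγ₀, hh]
  unfold NN
  rw [hset, Finset.card_erase_add_one hγ₀mem]

lemma NN_mul_sref_pos {w : V ≃ₗᵢ[ℝ] V} (hw : Wrd B w) {α : V} (hα : α ∈ B.Δ)
    (h : B.IsPos (w α)) : NN B (w * sref α) = NN B w + 1 := by
  have h1 : w * sref α = (sref α * w⁻¹)⁻¹ := by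
    rw [mul_inv_rev, inv_inv, sref_inv]
  have hw2 : Wrd B (sref α * w⁻¹) := (Wrd_sref B hα).mul B (hw.inv B)
  rw [h1, NN_inv B hw2]
  have h2 : B.IsPos ((w⁻¹)⁻¹ α) := by rw [inv_inv]; exact h
  rw [NN_sref_mul_pos B (hw.inv B) hα h2, NN_inv B hw]

lemma NN_mul_sref_neg {w : V ≃ₗᵢ[ℝ] V} (hw : Wrd B w) {α : V} (hα : α ∈ B.Δ)
    (h : B.IsNeg (w α)) : NN B (w * sref α) + 1 = NN B w := by
  have h1 : w * sref α = (sref α * w⁻¹)⁻¹ := by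
    rw [mul_inv_rev, inv_inv, sref_inv]
  have hw2 : Wrd B (sref α * w⁻¹) := (Wrd_sref B hα).mul B (hw.inv B)
  rw [h1, NN_inv B hw2]
  have h2 : B.IsNeg ((w⁻¹)⁻¹ α) := by rw [inv_inv]; exact h
  rw [NN_sref_mul_neg B (hw.inv B) hα h2, NN_inv B hw]

end NNrec
section Exchange
variable {R : NRootSystem V} (B : Base R)

lemma exchange : ∀ (l : List V), (∀ x ∈ l, x ∈ B.Δ) → ∀ α ∈ B.Δ,
    B.IsNeg ((l.map sref).prod α) →
    ∃ l' : List V, (∀ x ∈ l', x ∈ B.Δ) ∧ l'.length + 1 = l.length ∧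
      (l'.map sref).prod = (l.map sref).prod * sref α := by
  intro l
  induction l with
  | nil =>
    intro _ α hα hneg
    exfalso
    have h0 : ((List.map sref []).prod : V ≃ₗᵢ[ℝ] V) α = α := rfl
    rw [h0] at hneg
    exact not_pos_and_neg B (B.subset hα) ⟨isPos_simple B hα, hneg⟩
  | cons a t ih =>
    intro hl α hα hneg
    have ha : a ∈ B.Δ := hl a (by simp)
    have hlt : ∀ x ∈ t, x ∈ B.Δ := fun x hx => hl x (by simp [hx])
    set u := (t.map sref).prod with hu
    have hprod : ((a::t).map sref).prod = sref a * u := by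
      rw [List.map_cons, List.prod_cons]
    have huw : Wrd B u := ⟨t, hlt, rfl⟩
    have hβ'Φ : u α ∈ R.Φ := huw.maps B α (B.subset hα)
    have hneg' : B.IsNeg (sref a (u α)) := by
      rw [hprod] at hneg; exact hneg
    rcases pos_or_neg B hβ'Φ with hp | hn
    · have heq : u α = a := by
        by_contra hne
        exact not_pos_and_neg B (R.reflect_mem a (B.subset ha) _ hβ'Φ)
          ⟨sref_simple_isPos B ha hβ'Φ hp hne, hneg'⟩
      have hconj : sref a = u * sref α * u⁻¹ := by rw [← heq]; exact sref_conj u α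
      refine ⟨t, hlt, by simp, ?_⟩
      rw [hprod, hconj]
      have h2 := sref_mul_self α
      calc u = u * (sref α * sref α) := by rw [h2, mul_one]
        _ = u * sref α * u⁻¹ * u * sref α := by group
        _ = (u * sref α * u⁻¹ * u) * sref α := by rw [mul_assoc]
    · obtain ⟨t', ht', hlen, hprod'⟩ := ih hlt α hα hn
      refine ⟨a :: t', fun x hx => ?_, by simp [← hlen], ?_⟩
      · rcases List.mem_cons.1 hx with rfl | hx
        exacts [ha, ht' x hx]
      · rw [List.map_cons, List.prod_cons, hprod', hprod, mul_assoc]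

lemma word_NN : ∀ (l : List V), (∀ x ∈ l, x ∈ B.Δ) →
    NN B ((l.map sref).prod) ≤ l.length ∧
    (NN B ((l.map sref).prod) < l.length →
      ∃ l' : List V, (∀ x ∈ l', x ∈ B.Δ) ∧ l'.length + 2 = l.length ∧
        (l'.map sref).prod = (l.map sref).prod) := by
  intro l
  induction l using List.reverseRecOn with
  | nil =>
    intro _
    constructor
    · simp [NN_one B]
    · intro h; simp at h
  | append_singleton t α ih =>
    intro hl
    have hα : α ∈ B.Δ := hl α (by simp)
    have hlt : ∀ x ∈ t, x ∈ B.Δ := fun x hx => hl x (by simp [hx])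
    obtain ⟨ih1, ih2⟩ := ih hlt
    have hvw : Wrd B (t.map sref).prod := ⟨t, hlt, rfl⟩
    have hprod : ((t++[α]).map sref).prod = (t.map sref).prod * sref α := by
      rw [List.map_append, List.prod_append]
      simp
    have hvαΦ : (t.map sref).prod α ∈ R.Φ := hvw.maps B α (B.subset hα)
    rw [hprod]
    rcases pos_or_neg B hvαΦ with hp | hn
    · rw [NN_mul_sref_pos B hvw hα hp]
      constructor
      · simp only [List.length_append, List.length_cons, List.length_nil]
        omega
      · intro hlt2
        have hlt3 : NN B (t.map sref).prod < t.length := by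
          simp only [List.length_append, List.length_cons, List.length_nil] at hlt2
          omega
        obtain ⟨t', h1, h2, h3⟩ := ih2 hlt3
        refine ⟨t' ++ [α], fun x hx => ?_, ?_, ?_⟩
        · rcases List.mem_append.1 hx with hx | hx
          exacts [h1 x hx, by simp at hx; rw [hx]; exact hα]
        · simp only [List.length_append, List.length_cons, List.length_nil]
          omega
        · rw [List.map_append, List.prod_append, h3]
          simp
    · have hrec := NN_mul_sref_neg B hvw hα hn
      obtain ⟨t', h1, h2, h3⟩ := exchange B t hlt α hα hn
      constructor
      · simp only [List.length_append, List.length_cons, List.length_nil]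
        omega
      · intro _
        refine ⟨t', h1, ?_, h3⟩
        simp only [List.length_append, List.length_cons, List.length_nil]
        omega

lemma len_le_of_list {w : V ≃ₗᵢ[ℝ] V} {l : List V} (hl : ∀ x ∈ l, x ∈ B.Δ)
    (hw : w = (l.map sref).prod) : B.len w ≤ l.length := by
  apply Nat.sInf_le
  refine ⟨fun i : Fin l.length => l.get i, fun i => hl _ (List.get_mem l i), ?_⟩
  rw [hw]
  congr 1
  have h1 : (List.ofFn fun i => sref (l.get i)) = (List.ofFn l.get).map sref := by
    rw [List.map_ofFn]
    rfl
  rw [h1, List.ofFn_get]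

lemma len_attained {w : V ≃ₗᵢ[ℝ] V} (hw : Wrd B w) :
    ∃ l : List V, (∀ x ∈ l, x ∈ B.Δ) ∧ l.length = B.len w ∧ w = (l.map sref).prod := by
  obtain ⟨l₀, hl₀, hw₀⟩ := hw
  have hne : {n | ∃ g : Fin n → V, (∀ i, g i ∈ B.Δ) ∧
      w = (List.ofFn fun i => sref (g i)).prod}.Nonempty := by
    refine ⟨l₀.length, fun i : Fin l₀.length => l₀.get i, fun i => hl₀ _ (List.get_mem l₀ i), ?_⟩
    rw [hw₀]
    congr 1
    have h1 : (List.ofFn fun i => sref (l₀.get i)) = (List.ofFn l₀.get).map sref := by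
      rw [List.map_ofFn]
      rfl
    rw [h1, List.ofFn_get]
  obtain ⟨g, hg, hwg⟩ := Nat.sInf_mem hne
  refine ⟨List.ofFn g, fun x hx => ?_, by simp [Base.len], ?_⟩
  · obtain ⟨i, rfl⟩ := Set.mem_range.1 ((List.mem_ofFn' _ _).1 hx)
    exact hg i
  · conv_lhs => rw [hwg]
    congr 1
    rw [List.map_ofFn]
    rfl

lemma len_eq_NN {w : V ≃ₗᵢ[ℝ] V} (hw : Wrd B w) : B.len w = NN B w := by
  obtain ⟨l, hl, hlen, hprod⟩ := len_attained B hw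
  have hD := word_NN B l hl
  rw [← hprod] at hD
  obtain ⟨hle, hdel⟩ := hD
  rw [hlen] at hle hdel
  rcases lt_or_eq_of_le hle with hlt | heq
  · exfalso
    obtain ⟨l', h1, h2, h3⟩ := hdel hlt
    have := len_le_of_list B h1 h3.symm
    omega
  · omega

end Exchange
section TwoLength
variable {R : NRootSystem V}

lemma le_r {α : V} (hα : α ∈ R.Φ) : ⟪α, α⟫ ≤ R.r :=
  Finset.le_sup' (f := fun α : V => ⟪α, α⟫) hα

lemma exists_long : ∃ ε ∈ R.Φ, ⟪ε, ε⟫ = R.r := by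
  obtain ⟨ε, hε, h⟩ := Finset.exists_mem_eq_sup' R.nonempty (fun α : V => ⟪α, α⟫)
  exact ⟨ε, hε, h.symm⟩

lemma inner_sq_lt {α β : V} (hα : α ∈ R.Φ) (hβ : β ∈ R.Φ) (h1 : β ≠ α) (h2 : β ≠ -α) :
    ⟪β, α⟫ * ⟪β, α⟫ < ⟪α, α⟫ * ⟪β, β⟫ := by
  have hle := real_inner_mul_inner_self_le β α
  have haa := root_inner_pos hα
  have hbb := root_inner_pos hβ
  rcases lt_or_eq_of_le hle with h | h
  · nlinarith [h]
  · exfalso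
    set c := ⟪β, α⟫ / ⟪α, α⟫ with hc
    have hp : β - c • α = 0 := by
      rw [← @inner_self_eq_zero ℝ]
      have e1 : ⟪β - c • α, β - c • α⟫ = ⟪β, β⟫ - 2 * (c * ⟪β, α⟫) + c * (c * ⟪α, α⟫) := by
        rw [real_inner_sub_sub_self, real_inner_smul_right, real_inner_smul_left,
          real_inner_smul_right]
      rw [e1, hc]
      field_simp
      nlinarith [h]
    have hβeq : β = c • α := by rwa [sub_eq_zero] at hp
    have := R.reduced α hα c (by rw [← hβeq]; exact hβ)
    rcases this with h3 | h3
    · exact h1 (by rw [hβeq, h3, one_smul])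
    · exact h2 (by rw [hβeq, h3, neg_one_smul])

lemma ratio_cases {α β : V} (hα : α ∈ R.Φ) (hβ : β ∈ R.Φ) (h1 : β ≠ α) (h2 : β ≠ -α)
    (h3 : ⟪β, α⟫ ≠ 0) (h4 : ⟪α, α⟫ < ⟪β, β⟫) :
    2 * ⟪α, α⟫ ≤ ⟪β, β⟫ ∧ ⟪β, β⟫ ≤ 3 * ⟪α, α⟫ := by
  obtain ⟨n, hn⟩ := R.pairing_int α hα β hβ
  obtain ⟨m, hm⟩ := R.pairing_int β hβ α hα
  have haa := root_inner_pos hα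
  have hbb := root_inner_pos hβ
  have hcs := inner_sq_lt hα hβ h1 h2
  have hsymm : ⟪α, β⟫ = ⟪β, α⟫ := real_inner_comm β α
  rw [hsymm] at hm
  have heq : (n : ℝ) * ⟪α, α⟫ = (m : ℝ) * ⟪β, β⟫ := by linarith [hn, hm]
  have hprod : ((n * m : ℤ) : ℝ) * (⟪α, α⟫ * ⟪β, β⟫) = 4 * (⟪β, α⟫ * ⟪β, α⟫) := by
    push_cast
    linear_combination (-(m : ℝ) * ⟪β, β⟫) * hn + (-(2 * ⟪β, α⟫)) * hm
  have hnm_pos : 1 ≤ n * m := by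
    by_contra hcon
    push_neg at hcon
    have hc0 : n * m ≤ 0 := by omega
    have hc' : ((n * m : ℤ) : ℝ) ≤ 0 := by exact_mod_cast hc0
    have h5 : ((n * m : ℤ) : ℝ) * (⟪α, α⟫ * ⟪β, β⟫) ≤ 0 :=
      mul_nonpos_of_nonpos_of_nonneg hc' (le_of_lt (mul_pos haa hbb))
    have h6 : 0 < ⟪β, α⟫ * ⟪β, α⟫ := mul_self_pos.2 h3
    linarith [hprod]
  have hnm_lt : n * m ≤ 3 := by
    by_contra hcon
    push_neg at hcon
    have hc' : (4 : ℝ) ≤ ((n * m : ℤ) : ℝ) := by exact_mod_cast hcon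
    have h5 : 4 * (⟪α, α⟫ * ⟪β, β⟫) ≤ ((n * m : ℤ) : ℝ) * (⟪α, α⟫ * ⟪β, β⟫) :=
      mul_le_mul_of_nonneg_right hc' (le_of_lt (mul_pos haa hbb))
    linarith [hprod, hcs]
  have hm0 : m ≠ 0 := by
    rintro rfl
    rw [Int.cast_zero, zero_mul] at hm
    exact h3 (by linarith)
  -- k A = m² B
  have hkey : ((n * m : ℤ) : ℝ) * ⟪α, α⟫ = ((m * m : ℤ) : ℝ) * ⟪β, β⟫ := by
    push_cast
    linear_combination (m : ℝ) * heq
  have hm2 : m * m ≤ 2 := by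
    by_contra hcon
    push_neg at hcon
    have hc1 : (3 : ℝ) ≤ ((m * m : ℤ) : ℝ) := by exact_mod_cast hcon
    have hc2 : ((n * m : ℤ) : ℝ) ≤ 3 := by exact_mod_cast hnm_lt
    have h5 : (3 : ℝ) * ⟪β, β⟫ ≤ ((m * m : ℤ) : ℝ) * ⟪β, β⟫ :=
      mul_le_mul_of_nonneg_right hc1 (le_of_lt hbb)
    have h6 : ((n * m : ℤ) : ℝ) * ⟪α, α⟫ ≤ 3 * ⟪α, α⟫ :=
      mul_le_mul_of_nonneg_right hc2 (le_of_lt haa)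
    nlinarith [hkey, h4, haa]
  have h7 : 2 * m ≤ 3 ∧ -3 ≤ 2 * m := by
    constructor <;> nlinarith [sq_nonneg (m - 1), sq_nonneg (m + 1)]
  have hm1 : m * m = 1 := by
    have h8 : m = 1 ∨ m = -1 := by omega
    rcases h8 with rfl | rfl <;> ring
  have hBB : ⟪β, β⟫ = ((n * m : ℤ) : ℝ) * ⟪α, α⟫ := by
    rw [hkey, hm1]
    simp
  have hk2 : 2 ≤ n * m := by
    by_contra hcon
    push_neg at hcon
    have : n * m = 1 := by omega
    rw [this] at hBB
    simp only [Int.cast_one, one_mul] at hBB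
    linarith
  constructor
  · rw [hBB]
    have : (2 : ℝ) ≤ ((n * m : ℤ) : ℝ) := by exact_mod_cast hk2
    nlinarith
  · rw [hBB]
    have : ((n * m : ℤ) : ℝ) ≤ 3 := by exact_mod_cast hnm_lt
    nlinarith

lemma exists_same_norm_inner_ne {δ ε : V} (hδ : δ ∈ R.Φ) (hε : ε ∈ R.Φ) :
    ∃ x ∈ R.Φ, ⟪x, x⟫ = ⟪ε, ε⟫ ∧ ⟪δ, x⟫ ≠ 0 := by
  classical
  set O : Set V := {x | x ∈ R.Φ ∧ ⟪x, x⟫ = ⟪ε, ε⟫} with hO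
  set U : Submodule ℝ V := Submodule.span ℝ O with hU
  have hinv : ∀ γ ∈ R.Φ, ∀ u ∈ U, sref γ u ∈ U := by
    intro γ hγ u hu
    induction hu using Submodule.span_induction with
    | mem x hx =>
      apply Submodule.subset_span
      exact ⟨R.reflect_mem γ hγ x hx.1, by rw [(sref γ).inner_map_map x x]; exact hx.2⟩
    | zero => rw [map_zero]; exact U.zero_mem
    | add x y _ _ hx hy => rw [map_add]; exact U.add_mem hx hy
    | smul c x _ hx => rw [map_smul]; exact U.smul_mem c hx
  have hdich : ∀ γ ∈ R.Φ, γ ∈ U ∨ ∀ u ∈ U, ⟪γ, u⟫ = 0 := by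
    intro γ hγ
    by_cases hc : ∀ u ∈ U, ⟪γ, u⟫ = 0
    · exact Or.inr hc
    · left
      push_neg at hc
      obtain ⟨u, hu, hne⟩ := hc
      have hγγ : ⟪γ, γ⟫ ≠ 0 := ne_of_gt (root_inner_pos hγ)
      have huγ : ⟪u, γ⟫ ≠ 0 := by rwa [real_inner_comm]
      have hsub : u - sref γ u = (2 * ⟪u, γ⟫ / ⟪γ, γ⟫) • γ := by
        rw [sref_apply']
        abel
      have hγeq : γ = (⟪γ, γ⟫ / (2 * ⟪u, γ⟫)) • (u - sref γ u) := by
        rw [hsub, smul_smul]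
        rw [show ⟪γ, γ⟫ / (2 * ⟪u, γ⟫) * (2 * ⟪u, γ⟫ / ⟪γ, γ⟫) = 1 by field_simp]
        rw [one_smul]
      rw [hγeq]
      exact U.smul_mem _ (U.sub_mem hu (hinv γ hγ u hu))
  have hΦU : ∀ γ ∈ R.Φ, γ ∈ U := by
    intro γ hγ
    have hSne : (R.Φ.filter (fun x => x ∈ U)).Nonempty := by
      refine ⟨ε, Finset.mem_filter.2 ⟨hε, ?_⟩⟩
      exact Submodule.subset_span ⟨hε, rfl⟩
    by_cases hempty : (R.Φ \ R.Φ.filter (fun x => x ∈ U)).Nonempty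
    · exfalso
      obtain ⟨a, ha, b, hb, hab⟩ := R.irreducible _ (Finset.filter_subset _ _) hSne hempty
      have haU : a ∈ U := (Finset.mem_filter.1 ha).2
      have hbΦ : b ∈ R.Φ := (Finset.mem_sdiff.1 hb).1
      have hbU : b ∉ U := by
        intro h
        exact (Finset.mem_sdiff.1 hb).2 (Finset.mem_filter.2 ⟨hbΦ, h⟩)
      rcases hdich b hbΦ with h | h
      · exact hbU h
      · exact hab (by rw [real_inner_comm]; exact h a haU)
    · rw [Finset.not_nonempty_iff_eq_empty, Finset.sdiff_eq_empty_iff_subset] at hempty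
      exact (Finset.mem_filter.1 (hempty hγ)).2
  by_contra hcon
  push_neg at hcon
  have hδ0 : ∀ u ∈ U, ⟪δ, u⟫ = 0 := by
    intro u hu
    induction hu using Submodule.span_induction with
    | mem x hx => exact hcon x hx.1 hx.2
    | zero => exact inner_zero_right δ
    | add x y _ _ hx hy => rw [inner_add_right, hx, hy, add_zero]
    | smul c x _ hx => rw [real_inner_smul_right, hx, mul_zero]
  exact ne_of_gt (root_inner_pos hδ) (hδ0 δ (hΦU δ hδ))

lemma short_norm_one {γ : V} (hγ : γ ∈ R.Φ) (hlt : ⟪γ, γ⟫ < R.r) : ⟪γ, γ⟫ = 1 := by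
  rcases eq_or_lt_of_le (R.norm_one_le γ hγ) with h | h
  · exact h.symm
  exfalso
  obtain ⟨ε1, hε1, hn1⟩ := R.exists_norm_one
  obtain ⟨εr, hεr, hnr⟩ := exists_long (R := R)
  -- x : norm 1, not orthogonal to γ
  obtain ⟨x, hxΦ, hxn, hxin⟩ := exists_same_norm_inner_ne hγ hε1
  rw [hn1] at hxn
  have hγx : γ ≠ x := by rintro rfl; rw [hxn] at h; linarith
  have hγnx : γ ≠ -x := by
    rintro rfl
    have : ⟪(-x : V), -x⟫ = ⟪x, x⟫ := by simp [inner_neg_neg]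
    rw [this, hxn] at h
    linarith
  have hr1 := ratio_cases hxΦ hγ hγx hγnx hxin (by rw [hxn]; exact h)
  rw [hxn] at hr1
  -- y : norm r, not orthogonal to γ
  obtain ⟨y, hyΦ, hyn, hyin⟩ := exists_same_norm_inner_ne hγ hεr
  rw [hnr] at hyn
  have hyγ : y ≠ γ := by rintro rfl; rw [hyn] at hlt; linarith
  have hynγ : y ≠ -γ := by
    rintro rfl
    have : ⟪(-γ : V), -γ⟫ = ⟪γ, γ⟫ := by simp [inner_neg_neg]
    rw [this] at hyn
    rw [← hyn] at hlt
    linarith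
  have hr2 := ratio_cases hγ hyΦ hyγ hynγ
    (by rw [real_inner_comm]; exact hyin) (by rw [hyn]; exact hlt)
  rw [hyn] at hr2
  -- z : norm 1, not orthogonal to εr
  obtain ⟨z, hzΦ, hzn, hzin⟩ := exists_same_norm_inner_ne hεr hε1
  rw [hn1] at hzn
  have hrz : εr ≠ z := by
    rintro rfl
    rw [hzn] at hnr
    rw [← hnr] at hlt
    linarith
  have hrnz : εr ≠ -z := by
    rintro rfl
    have : ⟪(-z : V), -z⟫ = ⟪z, z⟫ := by simp [inner_neg_neg]
    rw [this, hzn] at hnr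
    rw [← hnr] at hlt
    linarith
  have hzr : ⟪z, z⟫ < ⟪εr, εr⟫ := by
    rw [hzn, hnr]
    linarith [hr1.1, hr2.1]
  have hr3 := ratio_cases hzΦ hεr hrz hrnz hzin hzr
  rw [hzn, hnr] at hr3
  linarith [hr1.1, hr2.1, hr3.2]

end TwoLength
section Main
variable {R : NRootSystem V} (B : Base R)

lemma simple_expand {α : V} (hα : α ∈ B.Δ) :
    α = ∑ x ∈ B.Δ, (if x = α then (1:ℝ) else 0) • x := by
  simp only [ite_smul, one_smul, zero_smul]
  rw [Finset.sum_ite_eq' B.Δ α (fun a => a)]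
  simp [hα]

lemma comb_expand {β α : V} (hβΦ : β ∈ R.Φ) (hα : α ∈ B.Δ) (a b : ℝ) :
    a • β + b • α = ∑ x ∈ B.Δ, (a * (B.coeff β x : ℝ) + b * (if x = α then 1 else 0)) • x := by
  rw [Finset.sum_congr rfl (fun x _ => add_smul _ _ x), Finset.sum_add_distrib]
  congr 1
  · rw [Finset.sum_congr rfl (fun x _ => mul_smul a _ x), ← Finset.smul_sum,
      ← B.coeff_spec β hβΦ]
  · rw [Finset.sum_congr rfl (fun x _ => mul_smul b _ x), ← Finset.smul_sum,
      ← simple_expand B hα]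

lemma pos_of_comb {β α δ : V} (hβΦ : β ∈ R.Φ) (hα : α ∈ B.Δ) (hht : 2 ≤ B.ht β)
    (hβpos : B.IsPos β) (hδΦ : δ ∈ R.Φ) {a b : ℝ} (ha : 0 < a)
    (hco : δ = ∑ x ∈ B.Δ, (a * (B.coeff β x : ℝ) + b * (if x = α then 1 else 0)) • x) :
    B.IsPos δ := by
  rcases pos_or_neg B hδΦ with h | h
  · exact h
  exfalso
  have hz : ∀ x ∈ B.Δ, x ≠ α → B.coeff β x = 0 := by
    intro x hx hne
    have h1 := coeff_eq B hδΦ _ hco x hx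
    simp only [hne, if_false, mul_zero, add_zero] at h1
    have h2 : (B.coeff δ x : ℝ) ≤ 0 := by exact_mod_cast h.2 x hx
    rw [← h1] at h2
    have h3 : (0:ℝ) ≤ (B.coeff β x : ℝ) := by exact_mod_cast hβpos.2 x hx
    have h4 : (B.coeff β x : ℝ) = 0 := by nlinarith
    exact_mod_cast h4
  have hβα : β = (B.coeff β α : ℝ) • α := by
    conv_lhs => rw [B.coeff_spec β hβΦ]
    rw [Finset.sum_eq_single_of_mem α hα (fun x hx hne => by rw [hz x hx hne]; simp)]
  have hco2 : B.ht β = B.coeff β α := by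
    unfold Base.ht
    rw [Finset.sum_eq_single_of_mem α hα (fun x hx hne => hz x hx hne)]
  rcases R.reduced α (B.subset hα) _ (by rw [← hβα]; exact hβΦ) with h5 | h5
  · have : B.coeff β α = 1 := by exact_mod_cast h5
    omega
  · have : B.coeff β α = -1 := by exact_mod_cast h5
    omega

lemma NN_sref_simple {α : V} (hα : α ∈ B.Δ) : NN B (sref α) = 1 := by
  have hpos : B.IsPos ((1 : V ≃ₗᵢ[ℝ] V)⁻¹ α) := by
    rw [inv_one]
    exact isPos_simple B hα
  have h := NN_sref_mul_pos B (Wrd_one B) hα hpos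
  rw [mul_one, NN_one B] at h
  exact h

lemma main_short : ∀ (k : ℕ) (β : V), β ∈ R.Φ → B.IsPos β → ⟪β, β⟫ = 1 →
    B.ht β = (k : ℤ) → Wrd B (sref β) ∧ (NN B (sref β) : ℤ) = 2 * (k : ℤ) - 1 := by
  intro k
  induction k with
  | zero =>
    intro β hβΦ hβpos _ hht
    exfalso
    have := ht_ge_one B hβΦ hβpos
    omega
  | succ k ih =>
    intro β hβΦ hβpos hβ1 hht
    rcases Nat.eq_zero_or_pos k with rfl | hk
    · -- height 1 : β is simple
      have hβΔ : β ∈ B.Δ := eq_simple_of_ht_one B hβΦ hβpos (by omega)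
      refine ⟨Wrd_sref B hβΔ, ?_⟩
      rw [NN_sref_simple B hβΔ]
      norm_num
    · -- height k+1 ≥ 2
      have hht2 : 2 ≤ B.ht β := by omega
      have hαΦ' : ∀ x ∈ B.Δ, x ∈ R.Φ := fun x hx => B.subset hx
      -- find α with ⟪β,α⟫ > 0
      obtain ⟨α, hα, hβα_pos⟩ : ∃ α ∈ B.Δ, 0 < ⟪β, α⟫ := by
        by_contra hcon
        push_neg at hcon
        have hsum : ∑ x ∈ B.Δ, (B.coeff β x : ℝ) * ⟪β, x⟫ = ⟪β, β⟫ := by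
          rw [show (⟪β, β⟫:ℝ) = ⟪β, ∑ x ∈ B.Δ, (B.coeff β x : ℝ) • x⟫ from by
            rw [← B.coeff_spec β hβΦ]]
          rw [inner_sum]
          exact Finset.sum_congr rfl (fun x _ => by rw [real_inner_smul_right])
        have hle : ∑ x ∈ B.Δ, (B.coeff β x : ℝ) * ⟪β, x⟫ ≤ 0 := by
          apply Finset.sum_nonpos
          intro x hx
          have h1 : (0:ℝ) ≤ (B.coeff β x : ℝ) := by exact_mod_cast hβpos.2 x hx
          exact mul_nonpos_of_nonneg_of_nonpos h1 (hcon x hx)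
        rw [hsum, hβ1] at hle
        linarith
      have hαΦ : α ∈ R.Φ := B.subset hα
      have haa := root_inner_pos hαΦ
      have ha1 : 1 ≤ ⟪α, α⟫ := R.norm_one_le α hαΦ
      have hβneα : β ≠ α := by
        rintro rfl
        rw [ht_simple B hα] at hht
        omega
      have hβnegα : β ≠ -α := by
        rintro rfl
        exact not_pos_and_neg B (neg_root_mem hαΦ)
          ⟨hβpos, (isNeg_neg_iff B hαΦ).2 (isPos_simple B hα)⟩
      -- show ⟨β,α∨⟩ = 1, i.e. 2⟪β,α⟫ = ⟪α,α⟫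
      have hn1 : 2 * ⟪β, α⟫ = ⟪α, α⟫ := by
        obtain ⟨n, hn⟩ := R.pairing_int α hαΦ β hβΦ
        obtain ⟨m, hm⟩ := R.pairing_int β hβΦ α hαΦ
        rw [hβ1, mul_one, real_inner_comm] at hm
        have hcs := inner_sq_lt hαΦ hβΦ hβneα hβnegα
        rw [hβ1, mul_one] at hcs
        have hnpos : 0 < n := by
          have : (0:ℝ) < (n:ℝ) * ⟪α, α⟫ := by rw [← hn]; linarith
          have : (0:ℝ) < (n:ℝ) := by nlinarith
          exact_mod_cast this
        have hmpos : 0 < m := by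
          have : (0:ℝ) < (m:ℝ) := by rw [← hm]; linarith
          exact_mod_cast this
        have hnm : (n:ℝ) * ⟪α, α⟫ = (m:ℝ) := by rw [← hn, ← hm]
        have hnlem : n ≤ m := by
          have h1 : (n:ℝ) ≤ (n:ℝ) * ⟪α, α⟫ := by
            have : (0:ℝ) < n := by exact_mod_cast hnpos
            nlinarith
          have h2 : (n:ℝ) ≤ (m:ℝ) := by linarith [hnm]
          exact_mod_cast h2
        have hnm4 : n * m < 4 := by
          have h1 : ((n * m : ℤ) : ℝ) * ⟪α, α⟫ = 4 * (⟪β, α⟫ * ⟪β, α⟫) := by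
            push_cast
            linear_combination (-(m : ℝ)) * hn + (-(2 * ⟪β, α⟫)) * hm
          have h2 : ((n * m : ℤ) : ℝ) * ⟪α, α⟫ < 4 * ⟪α, α⟫ := by linarith [hcs]
          have h3 : ((n * m : ℤ) : ℝ) < 4 := by
            by_contra hc
            push_neg at hc
            nlinarith
          exact_mod_cast h3
        have hneq1 : n = 1 := by nlinarith [hnpos, hmpos, hnlem, hnm4]
        rw [hneq1] at hn
        rw [hn]
        norm_num
      -- β' = β - α
      have hβ'def : sref α β = β - α := by
        rw [sref_apply', hn1, div_self (ne_of_gt haa), one_smul]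
      set β' := sref α β with hβ'
      have hβ'Φ : β' ∈ R.Φ := R.reflect_mem α hαΦ β hβΦ
      have hβ'pos : B.IsPos β' := sref_simple_isPos B hα hβΦ hβpos hβneα
      have hβ'1 : ⟪β', β'⟫ = 1 := by
        rw [hβ', (sref α).inner_map_map β β]
        exact hβ1
      have hβ'ht : B.ht β' = (k : ℤ) := by
        obtain ⟨n₀, hn₀, hco⟩ := coeff_sref_simple B hα hβΦ
        have hn₀1 : n₀ = 1 := by
          have : (n₀ : ℝ) * ⟪α, α⟫ = 1 * ⟪α, α⟫ := by rw [← hn₀, hn1, one_mul]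
          have h2 : (n₀ : ℝ) = 1 := mul_right_cancel₀ (ne_of_gt haa) this
          exact_mod_cast h2
        unfold Base.ht
        rw [Finset.sum_congr rfl (fun x hx => hco x hx), Finset.sum_sub_distrib]
        rw [hn₀1, Finset.sum_ite_eq' B.Δ α (fun _ => (1:ℤ))]
        simp only [hα, if_true]
        have : ∑ x ∈ B.Δ, B.coeff β x = B.ht β := rfl
        rw [this, hht]
        push_cast
        ring
      obtain ⟨hW', hN'⟩ := ih β' hβ'Φ hβ'pos hβ'1 hβ'ht
      -- conjugation
      have hββ' : β = sref α β' := by rw [hβ', sref_sref]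
      have hconj : sref β = sref α * sref β' * sref α := by
        conv_lhs => rw [hββ']
        rw [sref_conj, sref_inv]
      have hWβ : Wrd B (sref β) := by
        rw [hconj]
        exact ((Wrd_sref B hα).mul B hW').mul B (Wrd_sref B hα)
      refine ⟨hWβ, ?_⟩
      -- the element δ = s_{β'}(α) = α + a β' is positive
      set a := ⟪α, α⟫ with hadef
      have hαβ' : ⟪α, β'⟫ = -(a / 2) := by
        rw [hβ'def, inner_sub_right, real_inner_comm β α]
        rw [show ⟪β, α⟫ = a / 2 from by linarith [hn1], ← hadef]
        ring
      have hδeq : sref β' α = α + a • β' := by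
        rw [sref_apply', hβ'1, div_one, hαβ']
        rw [show 2 * -(a / 2) = -a from by ring]
        module
      have hδΦ : sref β' α ∈ R.Φ := R.reflect_mem β' hβ'Φ α hαΦ
      have hδpos : B.IsPos (sref β' α) := by
        apply pos_of_comb B hβΦ hα hht2 hβpos hδΦ (a := a) (b := 1 - a) haa
        rw [← comb_expand B hβΦ hα, hδeq, hβ'def]
        module
      -- ε = s_α s_{β'} (α) = a β - α is positive
      have hsref_αβ' : sref α β' = β := by rw [← hββ']
      have hεeq : sref α (sref β' α) = a • β + (-1 : ℝ) • α := by
        rw [hδeq, map_add, map_smul, sref_self α (root_ne_zero hαΦ), hsref_αβ']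
        module
      have hεΦ : sref α (sref β' α) ∈ R.Φ := R.reflect_mem α hαΦ _ hδΦ
      have hεpos : B.IsPos (sref α (sref β' α)) := by
        apply pos_of_comb B hβΦ hα hht2 hβpos hεΦ (a := a) (b := (-1 : ℝ)) haa
        rw [← comb_expand B hβΦ hα, hεeq]
      -- count
      have hw₁ : Wrd B (sref β' * sref α) := hW'.mul B (Wrd_sref B hα)
      have hc1 : NN B (sref β' * sref α) = NN B (sref β') + 1 :=
        NN_mul_sref_pos B hW' hα hδpos
      have hinv : (sref β' * sref α)⁻¹ α = sref α (sref β' α) := by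
        rw [mul_inv_rev, sref_inv, sref_inv]
        rfl
      have hc2 : NN B (sref α * (sref β' * sref α)) = NN B (sref β' * sref α) + 1 := by
        apply NN_sref_mul_pos B hw₁ hα
        rw [hinv]
        exact hεpos
      have hfin : sref β = sref α * (sref β' * sref α) := by rw [hconj, mul_assoc]
      rw [hfin, hc2, hc1]
      push_cast
      omega

end Main

/-- for every positive short root `β`, the length of the reflection `s_β`
satisfies `l(s_β) = 2·ht(β) − 1`. -/
theorem len_sref_short (R : NRootSystem V) (B : Base R) {β : V}
    (hβ : R.IsShort β) (hβpos : B.IsPos β) :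
    (B.len (sref β) : ℤ) = 2 * B.ht β - 1 := by
  obtain ⟨hβΦ, hβr⟩ := hβ
  have hβ1 : ⟪β, β⟫ = 1 := short_norm_one hβΦ hβr
  have hk := ht_ge_one B hβΦ hβpos
  have hkZ : B.ht β = ((B.ht β).toNat : ℤ) := (Int.toNat_of_nonneg (by omega)).symm
  obtain ⟨hW, hN⟩ := main_short B (B.ht β).toNat β hβΦ hβpos hβ1 hkZ
  rw [len_eq_NN B hW, hN, ← hkZ]
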